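/- Fix λ_u, λ, B, ρ > 0 and ω ∈ (0, 1), and set κ = λ_u/λ and ρ̂ = ρ/B. On a probability space, let W be a {0,1}-valued random variable with P(W = 1) = ω (the event that the typical user is served by an A-BS). Suppose: (i) conditional on W = 1, there are random variables N_{u,w} ∈ {1,2,…} with PMF K_t(λ_u, λ, ·), N_b ∈ {0,1,…} with PMF K(λ(1−ω), λω, ·), and SINR_d ∈ (0,∞) with P(SINR_d > τ | W = 1) = S_d(τ), conditionally mutually independent given W = 1; (ii) conditional on W = 0, there are random variables N_u ∈ {1,2,…} with PMF K_t(λ_u, λ, ·), N_b ∈ {1,2,…} with PMF K_t(λ(1−ω), λω, ·), N_{u,w} ∈ {0,1,…} with PMF K(λ_u, λ, ·), SINR_d with P(SINR_d > τ | W = 0) = S_d(τ), and SINR_b with P(SINR_b > τ | W = 0) = S_b(τ), conditionally mutually independent given W = 0. Define the rate Rate := (B/(N_{u,w} + κ·N_b))·log₂(1 + SINR_d) on {W = 1}, and Rate := (B/N_u)·min( (1 − κ/(κ·N_b + N_{u,w}))·log₂(1 + SINR_d), (κ/(κ·N_b + N_{u,w}))·log₂(1 + SINR_b) ) on {W = 0}.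 Then P(Rate > ρ) = ω·∑_{n≥0, m≥1} K(λ(1−ω), λω, n)·K_t(λ_u, λ, m)·S_d(2^{ρ̂(κn + m)} − 1) + (1−ω)·∑_{l≥1, n≥1, m≥0} K_t(λ_u, λ, l)·K_t(λ(1−ω), λω, n)·K(λ_u, λ, m)·S_b(2^{ρ̂·l·(n + m/κ)} − 1)·S_d(2^{ρ̂·l·(n + m/κ)/(n + m/κ − 1)} − 1), where in the second sum the term with n = 1 and m = 0 (for which n + m/κ − 1 = 0, so the access fraction is zero) is interpreted as 0. -/

import Mathlib

open MeasureTheory ProbabilityTheory Real Set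

/-- The load PMF of a typical cell:
`K(c,d,n) = (3.5^{3.5}/n!)·(Γ(n+3.5)/Γ(3.5))·(c/d)^n·(3.5 + c/d)^{−(n+3.5)}`. -/
noncomputable def Kpmf (c d : ℝ) (n : ℕ) : ℝ :=
  (3.5 : ℝ) ^ (3.5 : ℝ) / (n.factorial : ℝ)
    * (Real.Gamma ((n : ℝ) + 3.5) / Real.Gamma 3.5)
    * (c / d) ^ n * (3.5 + c / d) ^ (-((n : ℝ) + 3.5))

/-- The load PMF of the tagged cell (defined for `n ≥ 1`):
`K_t(c,d,n) = (3.5^{3.5}/(n−1)!)·(Γ(n+3.5)/Γ(3.5))·(c/d)^{n−1}·(3.5 + c/d)^{−(n+3.5)}`. -/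
noncomputable def Ktpmf (c d : ℝ) (n : ℕ) : ℝ :=
  (3.5 : ℝ) ^ (3.5 : ℝ) / ((n - 1).factorial : ℝ)
    * (Real.Gamma ((n : ℝ) + 3.5) / Real.Gamma 3.5)
    * (c / d) ^ (n - 1) * (3.5 + c / d) ^ (-((n : ℝ) + 3.5))


lemma gamma_integral' {b : ℝ} (hb : 0 < b) :
    ∫ s in Ioi (0:ℝ), s ^ (b - 1) * Real.exp (-s) = Real.Gamma b := by
  simpa using integral_rpow_mul_exp_neg_mul_Ioi hb one_pos

lemma scaled_gamma_integrable {b r : ℝ} (hb : 0 < b) (hr : 0 < r) :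
    IntegrableOn (fun s : ℝ => s ^ (b - 1) * Real.exp (-(r * s))) (Ioi 0) := by
  have h0 : IntegrableOn (fun x : ℝ => Real.exp (-x) * x ^ (b - 1)) (Ioi (r * 0)) := by
    simpa using Real.GammaIntegral_convergent hb
  have h1 : IntegrableOn (fun x : ℝ => Real.exp (-(r * x)) * (r * x) ^ (b - 1)) (Ioi 0) :=
    (integrableOn_Ioi_comp_mul_left_iff (fun x : ℝ => Real.exp (-x) * x ^ (b - 1)) 0 hr).2 h0
  have h2 := h1.const_mul (r ^ (b - 1))⁻¹
  refine IntegrableOn.congr_fun h2 (fun x hx => ?_) measurableSet_Ioi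
  have hx' : (0:ℝ) < x := hx
  rw [mul_rpow hr.le hx'.le]
  field_simp

lemma hasSum_gamma_series {a t : ℝ} (ha : 0 < a) (ht0 : 0 ≤ t) (ht1 : t < 1) :
    HasSum (fun n : ℕ => Real.Gamma ((n : ℝ) + a) / (n.factorial : ℝ) * t ^ n)
      (Real.Gamma a * (1 - t) ^ (-a)) := by
  have h1t : 0 < 1 - t := by linarith
  set f : ℕ → ℝ := fun n => Real.Gamma ((n : ℝ) + a) / (n.factorial : ℝ) * t ^ n with hf
  have hfnn : ∀ n, 0 ≤ f n := by
    intro n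
    have : 0 < Real.Gamma ((n : ℝ) + a) := Real.Gamma_pos_of_pos (by positivity)
    positivity
  set g : ℕ → ℝ → ℝ :=
    fun n s => t ^ n / (n.factorial : ℝ) * (s ^ ((n : ℝ) + a - 1) * Real.exp (-s)) with hg
  have hgnn : ∀ n : ℕ, ∀ᵐ s ∂(volume.restrict (Ioi (0:ℝ))), 0 ≤ g n s := by
    intro n
    filter_upwards [ae_restrict_mem measurableSet_Ioi] with s hs
    have hs' : (0:ℝ) < s := hs
    rw [hg]; positivity
  have hgint : ∀ n : ℕ, IntegrableOn (g n) (Ioi 0) := by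
    intro n
    have := (scaled_gamma_integrable (by positivity : (0:ℝ) < (n:ℝ) + a) one_pos).const_mul
      (t ^ n / (n.factorial : ℝ))
    refine IntegrableOn.congr_fun this (fun x _ => ?_) measurableSet_Ioi
    simp [hg]
  have hgval : ∀ n : ℕ, ∫ s in Ioi (0:ℝ), g n s = f n := by
    intro n
    rw [hg]
    simp only []
    rw [MeasureTheory.integral_const_mul, gamma_integral' (by positivity : (0:ℝ) < (n:ℝ) + a)]
    rw [hf]; ring
  -- ENNReal version of each term
  have hofReal : ∀ n : ℕ, ENNReal.ofReal (f n)
      = ∫⁻ s in Ioi (0:ℝ), ENNReal.ofReal (g n s) := by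
    intro n
    rw [← hgval n]
    exact MeasureTheory.ofReal_integral_eq_lintegral_ofReal (hgint n) (hgnn n)
  -- swap sum and integral
  have hmeas : ∀ n : ℕ, AEMeasurable (fun s : ℝ => ENNReal.ofReal (g n s))
      (volume.restrict (Ioi (0:ℝ))) := by
    intro n
    refine ENNReal.measurable_ofReal.comp_aemeasurable ?_
    exact (measurable_const.mul ((measurable_id.pow_const _).mul
      (Real.measurable_exp.comp measurable_neg))).aemeasurable
  have hswap : ∑' n : ℕ, ENNReal.ofReal (f n)
      = ∫⁻ s in Ioi (0:ℝ), ∑' n : ℕ, ENNReal.ofReal (g n s) := by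
    simp_rw [hofReal]
    exact (MeasureTheory.lintegral_tsum hmeas).symm
  -- pointwise sum
  have hpt : ∀ s ∈ Ioi (0:ℝ), (∑' n : ℕ, ENNReal.ofReal (g n s))
      = ENNReal.ofReal (s ^ (a - 1) * Real.exp (-((1 - t) * s))) := by
    intro s hs
    have hs' : (0:ℝ) < s := hs
    have hexp : HasSum (fun n : ℕ => (t * s) ^ n / (n.factorial : ℝ)) (Real.exp (t * s)) := by
      rw [Real.exp_eq_exp_ℝ]
      exact NormedSpace.expSeries_div_hasSum_exp (t * s)
    have hgs : HasSum (fun n : ℕ => g n s)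
        (s ^ (a - 1) * Real.exp (-s) * Real.exp (t * s)) := by
      have := hexp.mul_left (s ^ (a - 1) * Real.exp (-s))
      refine this.congr_fun fun n => ?_
      rw [hg]
      simp only []
      rw [show (n : ℝ) + a - 1 = (n : ℝ) + (a - 1) by ring,
        Real.rpow_add hs', Real.rpow_natCast, mul_pow]
      ring
    have hval : s ^ (a - 1) * Real.exp (-s) * Real.exp (t * s)
        = s ^ (a - 1) * Real.exp (-((1 - t) * s)) := by
      rw [mul_assoc, ← Real.exp_add]
      ring_nf
    rw [hval] at hgs
    rw [← hgs.tsum_eq]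
    refine (ENNReal.ofReal_tsum_of_nonneg (fun n => ?_) hgs.summable).symm
    have : (0:ℝ) < s := hs'
    rw [hg]; positivity
  have hfin : ∑' n : ℕ, ENNReal.ofReal (f n)
      = ENNReal.ofReal ((1 / (1 - t)) ^ a * Real.Gamma a) := by
    rw [hswap, MeasureTheory.setLIntegral_congr_fun measurableSet_Ioi
      hpt]
    rw [← MeasureTheory.ofReal_integral_eq_lintegral_ofReal
      (scaled_gamma_integrable ha h1t) ?_]
    · congr 1
      simpa using integral_rpow_mul_exp_neg_mul_Ioi ha h1t
    · filter_upwards [ae_restrict_mem measurableSet_Ioi] with s hs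
      have hs' : (0:ℝ) < s := hs
      positivity
  -- convert back to reals
  have hS : (1 / (1 - t)) ^ a * Real.Gamma a = Real.Gamma a * (1 - t) ^ (-a) := by
    rw [one_div, Real.inv_rpow h1t.le, ← Real.rpow_neg h1t.le, mul_comm]
  have hSnn : 0 ≤ (1 / (1 - t)) ^ a * Real.Gamma a := by
    have := Real.Gamma_pos_of_pos ha
    positivity
  have hsumtop : (∑' n : ℕ, ENNReal.ofReal (f n)) ≠ ⊤ := by
    rw [hfin]; exact ENNReal.ofReal_ne_top
  have hsummable : Summable f := by
    have h := ENNReal.summable_toReal hsumtop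
    refine h.congr fun n => ?_
    exact ENNReal.toReal_ofReal (hfnn n)
  have htsum : ∑' n, f n = Real.Gamma a * (1 - t) ^ (-a) := by
    rw [← hS]
    have h1 := ENNReal.tsum_toReal_eq (fun n : ℕ => (ENNReal.ofReal_ne_top : ENNReal.ofReal (f n) ≠ ⊤))
    rw [hfin] at h1
    rw [ENNReal.toReal_ofReal hSnn] at h1
    rw [h1]
    exact tsum_congr fun n => (ENNReal.toReal_ofReal (hfnn n)).symm
  exact htsum ▸ hsummable.hasSum


lemma hasSum_Ktpmf {c d : ℝ} (hc : 0 < c) (hd : 0 < d) :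
    HasSum (fun n : ℕ => Ktpmf c d (n + 1)) 1 := by
  have hx0 : 0 < c / d := by positivity
  obtain ⟨x, hxe⟩ : ∃ x : ℝ, c / d = x := ⟨_, rfl⟩
  rw [hxe] at hx0
  have hden : (0:ℝ) < 3.5 + x := by positivity
  set t : ℝ := x / (3.5 + x) with ht
  have ht0 : 0 ≤ t := by positivity
  have ht1 : t < 1 := by
    rw [ht, div_lt_one hden]; linarith
  have key := hasSum_gamma_series (a := 4.5) (t := t) (by norm_num) ht0 ht1
  set C : ℝ := (3.5 : ℝ) ^ (3.5 : ℝ) / Real.Gamma 3.5 * (3.5 + x) ^ (-(4.5:ℝ)) with hC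
  have hterm : ∀ n : ℕ, Ktpmf c d (n + 1)
      = C * (Real.Gamma ((n : ℝ) + 4.5) / (n.factorial : ℝ) * t ^ n) := by
    intro n
    rw [Ktpmf]
    rw [Nat.add_sub_cancel, hxe]
    have hcast : ((n + 1 : ℕ) : ℝ) + 3.5 = (n : ℝ) + 4.5 := by push_cast; ring
    rw [hcast]
    have hsplit : (3.5 + x) ^ (-((n : ℝ) + 4.5))
        = ((3.5 + x) ^ n)⁻¹ * (3.5 + x) ^ (-(4.5:ℝ)) := by
      rw [show -((n : ℝ) + 4.5) = -(n:ℝ) + -(4.5:ℝ) by ring, Real.rpow_add hden,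
        Real.rpow_neg hden.le, Real.rpow_natCast]
    rw [hsplit, hC, ht]
    rw [div_pow]
    have hpow : ((3.5 + x) ^ n : ℝ) ≠ 0 := by positivity
    have hG35 : Real.Gamma 3.5 ≠ 0 := (Real.Gamma_pos_of_pos (by norm_num)).ne'
    field_simp
  have h2 : HasSum (fun n : ℕ => Ktpmf c d (n + 1))
      (C * (Real.Gamma 4.5 * (1 - t) ^ (-(4.5:ℝ)))) := by
    have := key.mul_left C
    exact this.congr_fun fun n => hterm n
  have hval : C * (Real.Gamma 4.5 * (1 - t) ^ (-(4.5:ℝ))) = 1 := by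
    have hG : Real.Gamma 4.5 = 3.5 * Real.Gamma 3.5 := by
      rw [show (4.5:ℝ) = 3.5 + 1 by norm_num, Real.Gamma_add_one (by norm_num)]
    have h1mt : 1 - t = 3.5 / (3.5 + x) := by
      rw [ht]; field_simp; ring
    have hG35 : Real.Gamma 3.5 ≠ 0 := (Real.Gamma_pos_of_pos (by norm_num)).ne'
    have hd45 : ((3.5 + x) ^ (4.5:ℝ)) ≠ 0 := (Real.rpow_pos_of_pos hden _).ne'
    have h345 : ((3.5:ℝ) ^ (4.5:ℝ)) ≠ 0 := (Real.rpow_pos_of_pos (by norm_num) _).ne'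
    rw [hG, h1mt, hC, Real.div_rpow (by norm_num) hden.le,
      Real.rpow_neg (by norm_num : (0:ℝ) ≤ 3.5), Real.rpow_neg hden.le]
    rw [show (3.5:ℝ) ^ (3.5:ℝ) = (3.5:ℝ) ^ (4.5:ℝ) / 3.5 by
      rw [show (4.5:ℝ) = 3.5 + 1 by norm_num, Real.rpow_add (by norm_num), Real.rpow_one]
      field_simp]
    field_simp
  rwa [hval] at h2

lemma null_of_pmf_hasSum_one {Ω : Type*} [MeasurableSpace Ω] (μ : Measure Ω)
    [IsProbabilityMeasure μ] (N : Ω → ℕ) (hN : Measurable N) (p : ℕ → ℝ)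
    (h : ∀ n : ℕ, (μ (N ⁻¹' {n + 1})).toReal = p n) (hp : HasSum p 1) :
    μ (N ⁻¹' {0}) = 0 := by
  have hmeas : ∀ n : ℕ, MeasurableSet (N ⁻¹' {n}) := fun n => hN (measurableSet_singleton n)
  have hdisj : Pairwise (Function.onFun Disjoint fun n : ℕ => N ⁻¹' {n + 1}) := by
    intro i j hij
    simp only [Function.onFun, Set.disjoint_left, Set.mem_preimage, Set.mem_singleton_iff]
    intro ω h1 h2
    exact hij (by omega)
  have hU : μ (⋃ n : ℕ, N ⁻¹' {n + 1}) = ∑' n, μ (N ⁻¹' {n + 1}) :=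
    measure_iUnion hdisj fun n => hmeas (n + 1)
  have hUc : (⋃ n : ℕ, N ⁻¹' {n + 1}) = (N ⁻¹' {0})ᶜ := by
    ext ω
    simp only [Set.mem_iUnion, Set.mem_preimage, Set.mem_singleton_iff, Set.mem_compl_iff]
    constructor
    · rintro ⟨n, hn⟩; omega
    · intro h0; exact ⟨N ω - 1, by omega⟩
  have htr : (μ ((N ⁻¹' {0})ᶜ)).toReal = 1 := by
    rw [← hUc, hU, ENNReal.tsum_toReal_eq fun n => measure_ne_top μ _]
    simp_rw [h]
    exact hp.tsum_eq
  have h1 : μ ((N ⁻¹' {0})ᶜ) = 1 := (ENNReal.toReal_eq_one_iff _).1 htr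
  have h2 := (prob_compl_eq_zero_iff (μ := μ) (hmeas 0).compl).2 h1
  rwa [compl_compl] at h2

lemma logb_ineq_iff {s c : ℝ} (hs : 0 < s) :
    c < Real.logb 2 (1 + s) ↔ (2 : ℝ) ^ c - 1 < s := by
  rw [Real.lt_logb_iff_rpow_lt one_lt_two (by linarith), sub_lt_iff_lt_add, add_comm]

lemma mul_ineq_iff {a L c : ℝ} (ha : 0 < a) : c < a * L ↔ c / a < L := by
  rw [div_lt_iff₀ ha, mul_comm]

lemma sideA {Ω : Type*} [MeasurableSpace Ω] (μ : Measure Ω) [IsProbabilityMeasure μ]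
    (κ B ρ : ℝ) (hκ : 0 < κ) (hB : 0 < B) (hρ : 0 < ρ)
    (Nuw Nb : Ω → ℕ) (SINRd : Ω → ℝ) (Sd : ℝ → ℝ) (pM pN : ℕ → ℝ)
    (hNuw : Measurable Nuw) (hNb : Measurable Nb) (hSINRd : Measurable SINRd)
    (hpM : ∀ m : ℕ, (μ (Nuw ⁻¹' {m + 1})).toReal = pM m)
    (hpM1 : HasSum pM 1)
    (hpN : ∀ n : ℕ, (μ (Nb ⁻¹' {n})).toReal = pN n)
    (hSd : ∀ τ : ℝ, (μ (SINRd ⁻¹' Ioi τ)).toReal = Sd τ)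
    (hpos : ∀ᵐ ω ∂μ, 0 < SINRd ω)
    (hindep : ∀ (s₁ s₂ : Set ℕ) (s₃ : Set ℝ), MeasurableSet s₃ →
      μ (Nuw ⁻¹' s₁ ∩ Nb ⁻¹' s₂ ∩ SINRd ⁻¹' s₃)
        = μ (Nuw ⁻¹' s₁) * μ (Nb ⁻¹' s₂) * μ (SINRd ⁻¹' s₃)) :
    (μ {ω | B / ((Nuw ω : ℝ) + κ * (Nb ω : ℝ)) * Real.logb 2 (1 + SINRd ω) > ρ}).toReal
      = ∑' (n : ℕ) (m : ℕ),
          pN n * pM m * Sd ((2 : ℝ) ^ ((ρ / B) * (κ * (n : ℝ) + ((m : ℝ) + 1))) - 1) := by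
  set T : ℕ → ℕ → ℝ := fun n m => (2 : ℝ) ^ ((ρ / B) * (κ * (n : ℝ) + ((m : ℝ) + 1))) - 1
    with hT
  set f : Ω → ℝ :=
    fun ω => B / ((Nuw ω : ℝ) + κ * (Nb ω : ℝ)) * Real.logb 2 (1 + SINRd ω) with hfdef
  have hcoe : ∀ (N : Ω → ℕ), Measurable N → Measurable fun ω => ((N ω : ℝ)) :=
    fun N hN => measurable_from_nat.comp hN
  have hfm : Measurable f := by
    have h1 : Measurable fun ω => Real.logb 2 (1 + SINRd ω) := by
      have : (fun ω => Real.logb 2 (1 + SINRd ω))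
          = fun ω => Real.log (1 + SINRd ω) / Real.log 2 := by
        funext ω; rw [Real.logb]
      rw [this]
      exact (Real.measurable_log.comp (measurable_const.add hSINRd)).div_const _
    exact (measurable_const.div ((hcoe Nuw hNuw).add
      (measurable_const.mul (hcoe Nb hNb)))).mul h1
  set E : Set Ω := {ω | f ω > ρ} with hE
  have hEm : MeasurableSet E := measurableSet_lt measurable_const hfm
  set C : ℕ × ℕ → Set Ω := fun p => Nb ⁻¹' {p.1} ∩ Nuw ⁻¹' {p.2 + 1} with hC
  have hCm : ∀ p, MeasurableSet (C p) := fun p =>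
    (hNb (measurableSet_singleton _)).inter (hNuw (measurableSet_singleton _))
  have hCd : Pairwise (Function.onFun Disjoint C) := by
    intro p q hpq
    simp only [Function.onFun, Set.disjoint_left, hC, Set.mem_inter_iff, Set.mem_preimage,
      Set.mem_singleton_iff]
    rintro ω ⟨h1, h2⟩ ⟨h3, h4⟩
    exact hpq (Prod.ext (h1.symm.trans h3) (by omega))
  have hnull : μ (Nuw ⁻¹' {0}) = 0 :=
    null_of_pmf_hasSum_one μ Nuw hNuw pM hpM hpM1
  have hEdecomp : μ E = ∑' (n : ℕ) (m : ℕ), μ (E ∩ C (n, m)) := by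
    have h1 : μ (E ∩ ⋃ p, C p) + μ (E \ ⋃ p, C p) = μ E :=
      measure_inter_add_diff E (MeasurableSet.iUnion hCm)
    have h2 : μ (E \ ⋃ p, C p) = 0 := by
      refine measure_mono_null ?_ hnull
      intro ω hω
      simp only [Set.mem_diff, Set.mem_iUnion, not_exists, hC, Set.mem_inter_iff,
        Set.mem_preimage, Set.mem_singleton_iff] at hω
      have := hω.2 (Nb ω, Nuw ω - 1)
      simp only [Set.mem_preimage, Set.mem_singleton_iff]
      omega
    have h3 : μ E = μ (⋃ p, E ∩ C p) := by
      rw [← Set.inter_iUnion]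
      rw [← h1, h2, add_zero]
    rw [h3, measure_iUnion (fun p q hpq => (hCd hpq).mono inter_subset_right inter_subset_right)
      (fun p => hEm.inter (hCm p)), ENNReal.tsum_prod']
  have hterm : ∀ n m : ℕ, μ (E ∩ C (n, m))
      = μ (Nuw ⁻¹' {m + 1}) * μ (Nb ⁻¹' {n}) * μ (SINRd ⁻¹' Ioi (T n m)) := by
    intro n m
    have hae : (E ∩ C (n, m) : Set Ω) =ᵐ[μ] ((Nuw ⁻¹' {m + 1} ∩ Nb ⁻¹' {n} ∩ SINRd ⁻¹' Ioi (T n m) : Set Ω)) := by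
      rw [Filter.eventuallyEq_set]
      filter_upwards [hpos] with ω hs
      simp only [hE, hC, Set.mem_inter_iff, Set.mem_setOf_eq, Set.mem_preimage,
        Set.mem_singleton_iff, Set.mem_Ioi]
      have key : Nb ω = n → Nuw ω = m + 1 → (ρ < f ω ↔ T n m < SINRd ω) := by
        intro hb hu
        rw [hfdef]
        simp only []
        rw [hb, hu]
        push_cast
        have hD0 : (0 : ℝ) < (m : ℝ) + 1 + κ * n := by positivity
        have ha : (0 : ℝ) < B / ((m : ℝ) + 1 + κ * n) := by positivity
        rw [mul_ineq_iff ha, logb_ineq_iff hs, hT]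
        have : ρ / (B / ((m : ℝ) + 1 + κ * n)) = ρ / B * (κ * (n : ℝ) + ((m : ℝ) + 1)) := by
          rw [div_div_eq_mul_div]
          ring
        rw [this]
      constructor
      · rintro ⟨hf, hb, hu⟩
        exact ⟨⟨hu, hb⟩, (key hb hu).1 hf⟩
      · rintro ⟨⟨hu, hb⟩, hsd⟩
        exact ⟨(key hb hu).2 hsd, hb, hu⟩
    rw [measure_congr hae, hindep {m + 1} {n} (Ioi (T n m)) measurableSet_Ioi]
  have hgoal : (μ E).toReal
      = ∑' (n : ℕ) (m : ℕ), pN n * pM m * Sd (T n m) := by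
    have hfin : ∀ n : ℕ, (∑' m : ℕ, μ (E ∩ C (n, m))) ≠ ⊤ := by
      intro n
      refine ne_top_of_le_ne_top (measure_ne_top μ E) ?_
      rw [hEdecomp]
      exact ENNReal.le_tsum n
    rw [hEdecomp, ENNReal.tsum_toReal_eq hfin]
    refine tsum_congr fun n => ?_
    rw [ENNReal.tsum_toReal_eq fun m => measure_ne_top μ _]
    refine tsum_congr fun m => ?_
    rw [hterm n m, ENNReal.toReal_mul, ENNReal.toReal_mul, hpM m, hpN n, hSd (T n m)]
    ring
  exact hgoal

lemma sideC {Ω : Type*} [MeasurableSpace Ω] (μ : Measure Ω) [IsProbabilityMeasure μ]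
    (κ B ρ : ℝ) (hκ : 0 < κ) (hB : 0 < B) (hρ : 0 < ρ)
    (Nu Nb Nuw : Ω → ℕ) (SINRd SINRb : Ω → ℝ) (Sd Sb : ℝ → ℝ) (pK pN pM : ℕ → ℝ)
    (hNu : Measurable Nu) (hNb : Measurable Nb) (hNuw : Measurable Nuw)
    (hSINRd : Measurable SINRd) (hSINRb : Measurable SINRb)
    (hpK : ∀ k : ℕ, (μ (Nu ⁻¹' {k + 1})).toReal = pK k) (hpK1 : HasSum pK 1)
    (hpN : ∀ n : ℕ, (μ (Nb ⁻¹' {n + 1})).toReal = pN n) (hpN1 : HasSum pN 1)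
    (hpM : ∀ m : ℕ, (μ (Nuw ⁻¹' {m})).toReal = pM m)
    (hSd : ∀ τ : ℝ, (μ (SINRd ⁻¹' Ioi τ)).toReal = Sd τ)
    (hSb : ∀ τ : ℝ, (μ (SINRb ⁻¹' Ioi τ)).toReal = Sb τ)
    (hposd : ∀ᵐ ω ∂μ, 0 < SINRd ω) (hposb : ∀ᵐ ω ∂μ, 0 < SINRb ω)
    (hindep : ∀ (s₁ s₂ s₃ : Set ℕ) (t₁ t₂ : Set ℝ),
      MeasurableSet t₁ → MeasurableSet t₂ →
      μ (Nu ⁻¹' s₁ ∩ Nb ⁻¹' s₂ ∩ Nuw ⁻¹' s₃ ∩ SINRd ⁻¹' t₁ ∩ SINRb ⁻¹' t₂)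
        = μ (Nu ⁻¹' s₁) * μ (Nb ⁻¹' s₂) * μ (Nuw ⁻¹' s₃)
            * μ (SINRd ⁻¹' t₁) * μ (SINRb ⁻¹' t₂)) :
    (μ {ω | B / (Nu ω : ℝ)
        * min ((1 - κ / (κ * (Nb ω : ℝ) + (Nuw ω : ℝ))) * Real.logb 2 (1 + SINRd ω))
              ((κ / (κ * (Nb ω : ℝ) + (Nuw ω : ℝ))) * Real.logb 2 (1 + SINRb ω)) > ρ}).toReal
      = ∑' (k : ℕ) (n : ℕ) (m : ℕ),
          (if n = 0 ∧ m = 0 then 0 else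
            pK k * pN n * pM m
              * Sb ((2 : ℝ) ^ ((ρ / B) * ((k : ℝ) + 1) * (((n : ℝ) + 1) + (m : ℝ) / κ)) - 1)
              * Sd ((2 : ℝ) ^ ((ρ / B) * ((k : ℝ) + 1) * (((n : ℝ) + 1) + (m : ℝ) / κ)
                    / (((n : ℝ) + 1) + (m : ℝ) / κ - 1)) - 1)) := by
  set TB : ℕ → ℕ → ℕ → ℝ := fun k n m =>
    (2 : ℝ) ^ ((ρ / B) * ((k : ℝ) + 1) * (((n : ℝ) + 1) + (m : ℝ) / κ)) - 1 with hTB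
  set TD : ℕ → ℕ → ℕ → ℝ := fun k n m =>
    (2 : ℝ) ^ ((ρ / B) * ((k : ℝ) + 1) * (((n : ℝ) + 1) + (m : ℝ) / κ)
      / (((n : ℝ) + 1) + (m : ℝ) / κ - 1)) - 1 with hTD
  set f : Ω → ℝ := fun ω => B / (Nu ω : ℝ)
      * min ((1 - κ / (κ * (Nb ω : ℝ) + (Nuw ω : ℝ))) * Real.logb 2 (1 + SINRd ω))
            ((κ / (κ * (Nb ω : ℝ) + (Nuw ω : ℝ))) * Real.logb 2 (1 + SINRb ω)) with hfdef
  have hcoe : ∀ (N : Ω → ℕ), Measurable N → Measurable fun ω => ((N ω : ℝ)) :=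
    fun N hN => measurable_from_nat.comp hN
  have hlogb : ∀ (S : Ω → ℝ), Measurable S → Measurable fun ω => Real.logb 2 (1 + S ω) := by
    intro S hS
    have : (fun ω => Real.logb 2 (1 + S ω)) = fun ω => Real.log (1 + S ω) / Real.log 2 := by
      funext ω; rw [Real.logb]
    rw [this]
    exact (Real.measurable_log.comp (measurable_const.add hS)).div_const _
  have hfm : Measurable f := by
    have hden : Measurable fun ω => κ * (Nb ω : ℝ) + (Nuw ω : ℝ) :=
      (measurable_const.mul (hcoe Nb hNb)).add (hcoe Nuw hNuw)
    exact (measurable_const.div (hcoe Nu hNu)).mul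
      (((measurable_const.sub (measurable_const.div hden)).mul (hlogb SINRd hSINRd)).min
        ((measurable_const.div hden).mul (hlogb SINRb hSINRb)))
  set E : Set Ω := {ω | f ω > ρ} with hE
  have hEm : MeasurableSet E := measurableSet_lt measurable_const hfm
  set C : ℕ × ℕ × ℕ → Set Ω := fun p =>
    Nu ⁻¹' {p.1 + 1} ∩ Nb ⁻¹' {p.2.1 + 1} ∩ Nuw ⁻¹' {p.2.2} with hC
  have hCm : ∀ p, MeasurableSet (C p) := fun p =>
    ((hNu (measurableSet_singleton _)).inter (hNb (measurableSet_singleton _))).inter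
      (hNuw (measurableSet_singleton _))
  have hCd : Pairwise (Function.onFun Disjoint C) := by
    intro p q hpq
    simp only [Function.onFun, Set.disjoint_left, hC, Set.mem_inter_iff, Set.mem_preimage,
      Set.mem_singleton_iff]
    rintro ω ⟨⟨h1, h2⟩, h3⟩ ⟨⟨h4, h5⟩, h6⟩
    exact hpq (Prod.ext (by omega) (Prod.ext (by omega) (by omega)))
  have hnull0 : μ (Nu ⁻¹' {0}) = 0 := null_of_pmf_hasSum_one μ Nu hNu pK hpK hpK1
  have hnull1 : μ (Nb ⁻¹' {0}) = 0 := null_of_pmf_hasSum_one μ Nb hNb pN hpN hpN1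
  have hEdecomp : μ E = ∑' (k : ℕ) (n : ℕ) (m : ℕ), μ (E ∩ C (k, n, m)) := by
    have h1 : μ (E ∩ ⋃ p, C p) + μ (E \ ⋃ p, C p) = μ E :=
      measure_inter_add_diff E (MeasurableSet.iUnion hCm)
    have h2 : μ (E \ ⋃ p, C p) = 0 := by
      refine measure_mono_null ?_ (measure_union_null hnull0 hnull1)
      intro ω hω
      simp only [Set.mem_diff, Set.mem_iUnion, not_exists, hC, Set.mem_inter_iff,
        Set.mem_preimage, Set.mem_singleton_iff] at hω
      have h4 := hω.2 (Nu ω - 1, Nb ω - 1, Nuw ω)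
      dsimp only at h4
      simp only [Set.mem_union, Set.mem_preimage, Set.mem_singleton_iff]
      omega
    have h3 : μ E = μ (⋃ p, E ∩ C p) := by
      rw [← Set.inter_iUnion, ← h1, h2, add_zero]
    rw [h3, measure_iUnion (fun p q hpq => (hCd hpq).mono inter_subset_right inter_subset_right)
      (fun p => hEm.inter (hCm p)), ENNReal.tsum_prod']
    exact tsum_congr fun k => ENNReal.tsum_prod'
  have hterm : ∀ k n m : ℕ, μ (E ∩ C (k, n, m))
      = if n = 0 ∧ m = 0 then 0 else
          μ (Nu ⁻¹' {k + 1}) * μ (Nb ⁻¹' {n + 1}) * μ (Nuw ⁻¹' {m})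
            * μ (SINRd ⁻¹' Ioi (TD k n m)) * μ (SINRb ⁻¹' Ioi (TB k n m)) := by
    intro k n m
    by_cases hdeg : n = 0 ∧ m = 0
    · rw [if_pos hdeg]
      obtain ⟨rfl, rfl⟩ := hdeg
      have : E ∩ C (k, 0, 0) = ∅ := by
        rw [Set.eq_empty_iff_forall_notMem]
        rintro ω ⟨hf, ⟨hk, hb⟩, hu⟩
        simp only [Set.mem_preimage, Set.mem_singleton_iff] at hk hb hu
        have hf' : ρ < f ω := hf
        rw [hfdef] at hf'
        simp only [] at hf'
        rw [hk, hb, hu] at hf'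
        push_cast at hf'
        rw [show κ * (1 : ℝ) + 0 = κ by ring, div_self hκ.ne', sub_self, zero_mul] at hf'
        have hmin : min (0 : ℝ) (1 * Real.logb 2 (1 + SINRb ω)) ≤ 0 := min_le_left _ _
        have hpos' : (0 : ℝ) < B / ((k : ℝ) + 1) := by positivity
        nlinarith [mul_nonpos_of_nonneg_of_nonpos hpos'.le hmin]
      rw [this, measure_empty]
    · rw [if_neg hdeg]
      have hnm : (0 : ℝ) < κ * (n : ℝ) + (m : ℝ) := by
        rcases Nat.eq_zero_or_pos n with hn | hn
        · have hm : 1 ≤ m := by omega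
          have : (1 : ℝ) ≤ (m : ℝ) := by exact_mod_cast hm
          have hn' : (n : ℝ) = 0 := by exact_mod_cast hn
          nlinarith
        · have : (1 : ℝ) ≤ (n : ℝ) := by exact_mod_cast hn
          have hm : (0 : ℝ) ≤ (m : ℝ) := Nat.cast_nonneg m
          nlinarith
      have hae : (E ∩ C (k, n, m) : Set Ω) =ᵐ[μ]
          ((Nu ⁻¹' {k + 1} ∩ Nb ⁻¹' {n + 1} ∩ Nuw ⁻¹' {m}
            ∩ SINRd ⁻¹' Ioi (TD k n m) ∩ SINRb ⁻¹' Ioi (TB k n m) : Set Ω)) := by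
        rw [Filter.eventuallyEq_set]
        filter_upwards [hposd, hposb] with ω hsd hsb
        simp only [hE, hC, Set.mem_inter_iff, Set.mem_setOf_eq, Set.mem_preimage,
          Set.mem_singleton_iff, Set.mem_Ioi]
        have key : Nu ω = k + 1 → Nb ω = n + 1 → Nuw ω = m →
            (ρ < f ω ↔ (TD k n m < SINRd ω ∧ TB k n m < SINRb ω)) := by
          intro hk hb hu
          rw [hfdef]
          simp only []
          rw [hk, hb, hu]
          push_cast
          have hD : (0 : ℝ) < κ * ((n : ℝ) + 1) + (m : ℝ) := by positivity
          have hDκ : κ < κ * ((n : ℝ) + 1) + (m : ℝ) := by nlinarith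
          have hk0 : (0 : ℝ) < B / ((k : ℝ) + 1) := by positivity
          rw [mul_ineq_iff hk0, lt_min_iff]
          have hq : 1 - κ / (κ * ((n : ℝ) + 1) + (m : ℝ))
              = (κ * ((n : ℝ) + 1) + (m : ℝ) - κ) / (κ * ((n : ℝ) + 1) + (m : ℝ)) := by
            field_simp
          have hq0 : (0 : ℝ) < (κ * ((n : ℝ) + 1) + (m : ℝ) - κ) / (κ * ((n : ℝ) + 1) + (m : ℝ)) :=
            div_pos (by linarith) hD
          have hr0 : (0 : ℝ) < κ / (κ * ((n : ℝ) + 1) + (m : ℝ)) := div_pos hκ hD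
          have e1 : ρ / (B / ((k : ℝ) + 1))
                < (1 - κ / (κ * ((n : ℝ) + 1) + (m : ℝ))) * Real.logb 2 (1 + SINRd ω)
              ↔ TD k n m < SINRd ω := by
            rw [hq, mul_ineq_iff hq0, logb_ineq_iff hsd, hTD]
            have hexp : ρ / (B / ((k : ℝ) + 1))
                  / ((κ * ((n : ℝ) + 1) + (m : ℝ) - κ) / (κ * ((n : ℝ) + 1) + (m : ℝ)))
                = (ρ / B) * ((k : ℝ) + 1) * (((n : ℝ) + 1) + (m : ℝ) / κ)
                  / (((n : ℝ) + 1) + (m : ℝ) / κ - 1) := by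
              have h1 : (κ * ((n : ℝ) + 1) + (m : ℝ)) ≠ 0 := hD.ne'
              have h2 : (κ * ((n : ℝ) + 1) + (m : ℝ) - κ) ≠ 0 := by
                have : (0:ℝ) < κ * ((n : ℝ) + 1) + (m : ℝ) - κ := by linarith
                exact this.ne'
              have h3 : ((n : ℝ) + 1 + (m : ℝ) / κ - 1) ≠ 0 := by
                have h4 : (0:ℝ) < (κ * (n : ℝ) + (m : ℝ)) / κ := div_pos hnm hκ
                have h5 : (κ * (n : ℝ) + (m : ℝ)) / κ = (n : ℝ) + (m : ℝ) / κ := by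
                  rw [add_div, mul_div_cancel_left₀ _ hκ.ne']
                have : (0:ℝ) < (n : ℝ) + 1 + (m : ℝ) / κ - 1 := by
                  rw [h5] at h4; linarith
                exact this.ne'
              rw [div_div_eq_mul_div, div_div_eq_mul_div, div_eq_div_iff h2 h3]
              field_simp
            rw [hexp]
          have e2 : ρ / (B / ((k : ℝ) + 1))
                < (κ / (κ * ((n : ℝ) + 1) + (m : ℝ))) * Real.logb 2 (1 + SINRb ω)
              ↔ TB k n m < SINRb ω := by
            rw [mul_ineq_iff hr0, logb_ineq_iff hsb, hTB]
            have hexp : ρ / (B / ((k : ℝ) + 1)) / (κ / (κ * ((n : ℝ) + 1) + (m : ℝ)))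
                = (ρ / B) * ((k : ℝ) + 1) * (((n : ℝ) + 1) + (m : ℝ) / κ) := by
              have h1 : (κ * ((n : ℝ) + 1) + (m : ℝ)) ≠ 0 := hD.ne'
              rw [div_div_eq_mul_div, div_div_eq_mul_div, div_eq_iff hκ.ne']
              field_simp
            rw [hexp]
          exact and_congr e1 e2
        constructor
        · rintro ⟨hf, ⟨hk, hb⟩, hu⟩
          obtain ⟨hd, hb2⟩ := (key hk hb hu).1 hf
          exact ⟨⟨⟨⟨hk, hb⟩, hu⟩, hd⟩, hb2⟩
        · rintro ⟨⟨⟨⟨hk, hb⟩, hu⟩, hd⟩, hb2⟩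
          exact ⟨(key hk hb hu).2 ⟨hd, hb2⟩, ⟨hk, hb⟩, hu⟩
      rw [measure_congr hae,
        hindep {k + 1} {n + 1} {m} (Ioi (TD k n m)) (Ioi (TB k n m))
          measurableSet_Ioi measurableSet_Ioi]
  have hfin2 : ∀ k : ℕ, (∑' (n : ℕ) (m : ℕ), μ (E ∩ C (k, n, m))) ≠ ⊤ := by
    intro k
    refine ne_top_of_le_ne_top (measure_ne_top μ E) ?_
    rw [hEdecomp]
    exact ENNReal.le_tsum k
  have hfin3 : ∀ k n : ℕ, (∑' (m : ℕ), μ (E ∩ C (k, n, m))) ≠ ⊤ := by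
    intro k n
    refine ne_top_of_le_ne_top (hfin2 k) ?_
    exact ENNReal.le_tsum n
  rw [hEdecomp, ENNReal.tsum_toReal_eq hfin2]
  refine tsum_congr fun k => ?_
  rw [ENNReal.tsum_toReal_eq (hfin3 k)]
  refine tsum_congr fun n => ?_
  rw [ENNReal.tsum_toReal_eq fun m => measure_ne_top μ _]
  refine tsum_congr fun m => ?_
  rw [hterm k n m]
  by_cases hdeg : n = 0 ∧ m = 0
  · rw [if_pos hdeg, if_pos hdeg, ENNReal.toReal_zero]
  · rw [if_neg hdeg, if_neg hdeg, ENNReal.toReal_mul, ENNReal.toReal_mul, ENNReal.toReal_mul,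
      ENNReal.toReal_mul, hpK k, hpN n, hpM m, hSd (TD k n m), hSb (TB k n m)]
    ring

/-- Rate coverage of a self-backhauled mmWave network (Lemma 2 of the paper).
`A` is the event that the typical user is served by an A-BS (`P(A) = w`); conditional on `A`
the loads `N_{u,w}`, `N_b` and the access SINR are mutually independent with the displayed
distributions, and conditional on `Aᶜ` the loads `N_u`, `N_b`, `N_{u,w}` and the access and
backhaul SINRs are mutually independent with the displayed distributions.  With
`κ = λ_u/λ` and `ρ̂ = ρ/B`, the rate of equation (1) has the coverage of equation (5),
the doubly-degenerate backhaul term (`n = 1`, `m = 0`) being interpreted as `0`. -/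
theorem rate_coverage_self_backhaul {Ω : Type*} [MeasurableSpace Ω]
    (Pr : Measure Ω) [IsProbabilityMeasure Pr]
    (lu l B ρ w : ℝ) (hlu : 0 < lu) (hl : 0 < l) (hB : 0 < B) (hρ : 0 < ρ)
    (hw0 : 0 < w) (hw1 : w < 1)
    (A : Set Ω) (hA : MeasurableSet A) (hPA : (Pr A).toReal = w)
    (Nuw Nb Nu : Ω → ℕ) (SINRd SINRb : Ω → ℝ) (Sd Sb : ℝ → ℝ)
    (hNuw : Measurable Nuw) (hNb : Measurable Nb) (hNu : Measurable Nu)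
    (hSINRd : Measurable SINRd) (hSINRb : Measurable SINRb)
    -- conditional on A: distributions of N_{u,w} ∈ {1,2,…}, N_b ∈ {0,1,…}, SINR_d ∈ (0,∞)
    (hA_Nuw : ∀ n : ℕ, (Pr[|A] {ω | Nuw ω = n + 1}).toReal = Ktpmf lu l (n + 1))
    (hA_Nb : ∀ n : ℕ, (Pr[|A] {ω | Nb ω = n}).toReal = Kpmf (l * (1 - w)) (l * w) n)
    (hA_Sd : ∀ τ : ℝ, (Pr[|A] {ω | SINRd ω > τ}).toReal = Sd τ)
    (hA_pos : ∀ᵐ ω ∂(Pr[|A]), 0 < SINRd ω)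
    -- conditional mutual independence given A
    (hA_indep : ∀ (s₁ s₂ : Set ℕ) (s₃ : Set ℝ), MeasurableSet s₃ →
      Pr[|A] (Nuw ⁻¹' s₁ ∩ Nb ⁻¹' s₂ ∩ SINRd ⁻¹' s₃)
        = Pr[|A] (Nuw ⁻¹' s₁) * Pr[|A] (Nb ⁻¹' s₂) * Pr[|A] (SINRd ⁻¹' s₃))
    -- conditional on Aᶜ: distributions of N_u ∈ {1,2,…}, N_b ∈ {1,2,…}, N_{u,w} ∈ {0,1,…},
    -- SINR_d and SINR_b ∈ (0,∞)
    (hAc_Nu : ∀ n : ℕ, (Pr[|Aᶜ] {ω | Nu ω = n + 1}).toReal = Ktpmf lu l (n + 1))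
    (hAc_Nb : ∀ n : ℕ,
      (Pr[|Aᶜ] {ω | Nb ω = n + 1}).toReal = Ktpmf (l * (1 - w)) (l * w) (n + 1))
    (hAc_Nuw : ∀ n : ℕ, (Pr[|Aᶜ] {ω | Nuw ω = n}).toReal = Kpmf lu l n)
    (hAc_Sd : ∀ τ : ℝ, (Pr[|Aᶜ] {ω | SINRd ω > τ}).toReal = Sd τ)
    (hAc_Sb : ∀ τ : ℝ, (Pr[|Aᶜ] {ω | SINRb ω > τ}).toReal = Sb τ)
    (hAc_posd : ∀ᵐ ω ∂(Pr[|Aᶜ]), 0 < SINRd ω)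
    (hAc_posb : ∀ᵐ ω ∂(Pr[|Aᶜ]), 0 < SINRb ω)
    -- conditional mutual independence given Aᶜ
    (hAc_indep : ∀ (s₁ s₂ s₃ : Set ℕ) (t₁ t₂ : Set ℝ),
      MeasurableSet t₁ → MeasurableSet t₂ →
      Pr[|Aᶜ] (Nu ⁻¹' s₁ ∩ Nb ⁻¹' s₂ ∩ Nuw ⁻¹' s₃ ∩ SINRd ⁻¹' t₁ ∩ SINRb ⁻¹' t₂)
        = Pr[|Aᶜ] (Nu ⁻¹' s₁) * Pr[|Aᶜ] (Nb ⁻¹' s₂) * Pr[|Aᶜ] (Nuw ⁻¹' s₃)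
            * Pr[|Aᶜ] (SINRd ⁻¹' t₁) * Pr[|Aᶜ] (SINRb ⁻¹' t₂))
    -- the rate of equation (1)
    (Rate : Ω → ℝ)
    (hRateA : ∀ ω ∈ A,
      Rate ω = B / ((Nuw ω : ℝ) + (lu / l) * (Nb ω : ℝ)) * Real.logb 2 (1 + SINRd ω))
    (hRateAc : ∀ ω ∉ A,
      Rate ω = B / (Nu ω : ℝ)
        * min ((1 - (lu / l) / ((lu / l) * (Nb ω : ℝ) + (Nuw ω : ℝ)))
                * Real.logb 2 (1 + SINRd ω))
              (((lu / l) / ((lu / l) * (Nb ω : ℝ) + (Nuw ω : ℝ)))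
                * Real.logb 2 (1 + SINRb ω))) :
    (Pr {ω | Rate ω > ρ}).toReal
      = w * ∑' (n : ℕ) (m : ℕ),
            Kpmf (l * (1 - w)) (l * w) n * Ktpmf lu l (m + 1)
              * Sd ((2 : ℝ) ^ ((ρ / B) * ((lu / l) * (n : ℝ) + ((m : ℝ) + 1))) - 1)
        + (1 - w) * ∑' (k : ℕ) (n : ℕ) (m : ℕ),
            (if n = 0 ∧ m = 0 then 0 else
              Ktpmf lu l (k + 1) * Ktpmf (l * (1 - w)) (l * w) (n + 1) * Kpmf lu l m
                * Sb ((2 : ℝ) ^ ((ρ / B) * ((k : ℝ) + 1)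
                        * (((n : ℝ) + 1) + (m : ℝ) / (lu / l))) - 1)
                * Sd ((2 : ℝ) ^ ((ρ / B) * ((k : ℝ) + 1)
                        * (((n : ℝ) + 1) + (m : ℝ) / (lu / l))
                        / (((n : ℝ) + 1) + (m : ℝ) / (lu / l) - 1)) - 1)) := by
  have hκ : 0 < lu / l := div_pos hlu hl
  have hPrA_fin : Pr A ≠ ⊤ := measure_ne_top _ _
  have hPrA_ne : Pr A ≠ 0 := by
    intro h
    rw [h] at hPA
    simp only [ENNReal.toReal_zero] at hPA
    linarith
  have hPAc : (Pr Aᶜ).toReal = 1 - w := by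
    rw [measure_compl hA hPrA_fin, measure_univ,
      ENNReal.toReal_sub_of_le prob_le_one (by simp), ENNReal.toReal_one, hPA]
  have hPrAc_ne : Pr Aᶜ ≠ 0 := by
    intro h
    rw [h] at hPAc
    simp only [ENNReal.toReal_zero] at hPAc
    linarith
  haveI : IsProbabilityMeasure (Pr[|A]) := cond_isProbabilityMeasure hPrA_ne
  haveI : IsProbabilityMeasure (Pr[|Aᶜ]) := cond_isProbabilityMeasure hPrAc_ne
  set EA : Set Ω :=
    {ω | B / ((Nuw ω : ℝ) + lu / l * (Nb ω : ℝ)) * Real.logb 2 (1 + SINRd ω) > ρ} with hEA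
  set EC : Set Ω :=
    {ω | B / (Nu ω : ℝ)
      * min ((1 - lu / l / (lu / l * (Nb ω : ℝ) + (Nuw ω : ℝ))) * Real.logb 2 (1 + SINRd ω))
            ((lu / l / (lu / l * (Nb ω : ℝ) + (Nuw ω : ℝ))) * Real.logb 2 (1 + SINRb ω))
        > ρ} with hEC
  have hsplit : Pr {ω | Rate ω > ρ} = Pr A * Pr[|A] EA + Pr Aᶜ * Pr[|Aᶜ] EC := by
    have mulA : Pr A * Pr[|A] EA = Pr (A ∩ EA) := by
      rw [cond_apply hA, ← mul_assoc, ENNReal.mul_inv_cancel hPrA_ne hPrA_fin, one_mul]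
    have mulC : Pr Aᶜ * Pr[|Aᶜ] EC = Pr (Aᶜ ∩ EC) := by
      rw [cond_apply hA.compl, ← mul_assoc,
        ENNReal.mul_inv_cancel hPrAc_ne (measure_ne_top _ _), one_mul]
    have e1 : {ω | Rate ω > ρ} ∩ A = A ∩ EA := by
      apply Set.ext
      intro ω
      simp only [Set.mem_inter_iff, Set.mem_setOf_eq, hEA]
      constructor
      · rintro ⟨hr, ha⟩
        refine ⟨ha, ?_⟩
        rw [← hRateA ω ha]
        exact hr
      · rintro ⟨ha, he⟩
        refine ⟨?_, ha⟩
        rw [hRateA ω ha]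
        exact he
    have e2 : {ω | Rate ω > ρ} \ A = Aᶜ ∩ EC := by
      apply Set.ext
      intro ω
      simp only [Set.mem_diff, Set.mem_inter_iff, Set.mem_setOf_eq, Set.mem_compl_iff, hEC]
      constructor
      · rintro ⟨hr, ha⟩
        refine ⟨ha, ?_⟩
        rw [← hRateAc ω ha]
        exact hr
      · rintro ⟨ha, he⟩
        refine ⟨?_, ha⟩
        rw [hRateAc ω ha]
        exact he
    rw [mulA, mulC, ← measure_inter_add_diff {ω | Rate ω > ρ} hA, e1, e2]
  rw [hsplit, ENNReal.toReal_add (ENNReal.mul_ne_top hPrA_fin (measure_ne_top _ _))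
    (ENNReal.mul_ne_top (measure_ne_top _ _) (measure_ne_top _ _)),
    ENNReal.toReal_mul, ENNReal.toReal_mul, hPA, hPAc]
  congr 1
  · congr 1
    exact sideA (Pr[|A]) (lu / l) B ρ hκ hB hρ Nuw Nb SINRd Sd
      (fun m => Ktpmf lu l (m + 1)) (fun n => Kpmf (l * (1 - w)) (l * w) n)
      hNuw hNb hSINRd hA_Nuw (hasSum_Ktpmf hlu hl) hA_Nb hA_Sd hA_pos hA_indep
  · congr 1
    exact sideC (Pr[|Aᶜ]) (lu / l) B ρ hκ hB hρ Nu Nb Nuw SINRd SINRb Sd Sb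
      (fun k => Ktpmf lu l (k + 1)) (fun n => Ktpmf (l * (1 - w)) (l * w) (n + 1))
      (fun m => Kpmf lu l m)
      hNu hNb hNuw hSINRd hSINRb hAc_Nu (hasSum_Ktpmf hlu hl) hAc_Nb
      (hasSum_Ktpmf (mul_pos hl (by linarith)) (mul_pos hl hw0))
      hAc_Nuw hAc_Sd hAc_Sb hAc_posd hAc_posb hAc_indep
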